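/- Let F : Set → Set be a finitary functor and let F̄ be its canonical Perm(𝕍)-set lifting (induced by the strength s_{Perm(𝕍),X} : Perm(𝕍) × FX → F(Perm(𝕍) × X)). Then for every nominal set X, every element of F̄X has finite support; hence F̄ restricts to an endofunctor on nominal sets. -/

import Mathlib

/-- The subgroup of finite (finitary) permutations of the set `𝕍` of atoms. -/
def FinPerm (𝕍 : Type*) : Subgroup (Equiv.Perm 𝕍) where
  carrier := {π | {a | π a ≠ a}.Finite}
  one_mem' := by simp
  mul_mem' := by
    intro π σ hπ hσ
    apply Set.Finite.subset (hσ.union (hπ.preimage σ.injective.injOn))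
    intro a ha
    by_cases h : σ a = a
    · right
      simp only [Set.mem_preimage, Set.mem_setOf_eq]
      simpa [Equiv.Perm.mul_apply, h] using ha
    · exact Or.inl h
  inv_mem' := by
    intro π hπ
    have : {a | π⁻¹ a ≠ a} = {a | π a ≠ a} := by
      ext a
      simp only [Set.mem_setOf_eq, not_iff_not]
      rw [Equiv.Perm.inv_eq_iff_eq, eq_comm]
    change {a | π⁻¹ a ≠ a}.Finite
    rw [this]
    exact hπ

open CategoryTheory

/-- For a finitary `Set`-functor `F` and a nominal set `X`, every element of `F X` is
finitely supported with respect to the canonical lifting action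
`π • t = F.map (π • ·) t` (which is `F α ∘ s_{Perm(𝕍),X}` for the canonical strength). -/
theorem stmt9 {𝕍 : Type} [Infinite 𝕍] (F : Type ⥤ Type)
    (hfin : ∀ (X : Type) (t : F.obj X), ∃ S : Finset X,
      ∃ t' : F.obj {x : X // x ∈ S}, F.map (TypeCat.ofHom Subtype.val) t' = t)
    (X : Type) [MulAction (FinPerm 𝕍) X]
    (hX : ∀ x : X, ∃ S : Finset 𝕍, ∀ π : FinPerm 𝕍, (∀ a ∈ S, π • a = a) → π • x = x)
    (t : F.obj X) :
    ∃ S : Finset 𝕍, ∀ π : FinPerm 𝕍, (∀ a ∈ S, π • a = a) →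
      F.map (TypeCat.ofHom fun x : X => π • x) t = t := by
  classical
  obtain ⟨S, t', ht'⟩ := hfin X t
  choose supp hsupp using hX
  refine ⟨S.biUnion (fun x => supp x), fun π hπ => ?_⟩
  have hfix : ∀ x ∈ S, π • x = x := fun x hx =>
    hsupp x π (fun a ha => hπ a (Finset.mem_biUnion.mpr ⟨x, hx, ha⟩))
  subst ht'
  rw [← FunctorToTypes.map_comp_apply]
  apply congrArg (fun f => F.map f t')
  ext x
  exact hfix x.1 x.2
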